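/- The complete bipartite graph K_{m,m+1} is stable: every complex root x of (1+x)^{m+1} + (1+x)^m - 1 satisfies Re(x) ≤ 0, for every m ≥ 1. -/

import Mathlib

theorem Kmmsucc_stable (m : ℕ) (hm : 1 ≤ m) (x : ℂ)
    (hx : (1 + x) ^ (m + 1) + (1 + x) ^ m - 1 = 0) : x.re ≤ 0 := by
  by_contra h
  push_neg at h
  set w : ℂ := 1 + x with hw
  have key : w ^ m * (w + 1) = 1 := by
    have : w ^ (m + 1) + w ^ m = 1 := by linear_combination hx
    linear_combination this
  have hwre : (1 : ℝ) < w.re := by simp [hw]; linarith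
  have h1 : (1 : ℝ) < ‖w‖ := lt_of_lt_of_le hwre (Complex.re_le_norm w)
  have h2 : (2 : ℝ) < ‖w + 1‖ := by
    have := Complex.re_le_norm (w + 1)
    simp [Complex.add_re] at this
    linarith
  have habs : ‖w ^ m * (w + 1)‖ = 1 := by rw [key]; simp
  rw [norm_mul, norm_pow] at habs
  have hp : (1 : ℝ) ≤ ‖w‖ ^ m := one_le_pow₀ h1.le
  nlinarith [norm_nonneg w, norm_nonneg (w + 1)]
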